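/- Let S be a densely defined, closed, symmetric operator in a Hilbert space H with S ≥ εI for some ε > 0, and S_K its Krein–von Neumann extension. For λ ≠ 0, there exists a nonzero v ∈ dom(S_K) with S_K v = λv if and only if there exists a nonzero u ∈ dom(S*S) with S*S u = λ S u; moreover the solutions correspond via u = (S_F)⁻¹ S_K v and v = λ⁻¹ S u. -/

import Mathlib

open scoped ComplexInnerProductSpace
open Filter

noncomputable section

variable {H : Type*} [NormedAddCommGroup H] [InnerProductSpace ℂ H] [CompleteSpace H]

/-- The kernel of the adjoint `S*` of a densely defined operator `S`,
described as `{v | ∀ u ∈ dom S, ⟪S u, v⟫ = 0}`. -/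
def adjKerD (S : H →ₗ.[ℂ] H) : Submodule ℂ H where
  carrier := {v | ∀ u : S.domain, ⟪S u, v⟫ = 0}
  add_mem' := by
    intro a b ha hb u
    rw [inner_add_right, ha u, hb u, add_zero]
  zero_mem' := by
    intro u; exact inner_zero_right _
  smul_mem' := by
    intro c a ha u
    rw [inner_smul_right, ha u, mul_zero]

/-- Lemma 3.1: For `S` densely defined, closed, symmetric with `S ≥ ε·I`,
`ε > 0`, and `λ ≠ 0`: there is `0 ≠ v ∈ dom S_K` with `S_K v = λ v` iff there is
`0 ≠ u ∈ dom (S*S)` with `S*S u = λ S u` (encoded as: `S u ∈ dom S*` and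
`S*(S u) = λ • S u`, via `∀ w ∈ dom S, ⟪S w, S u⟫ = ⟪w, λ • S u⟫`); moreover the
solutions correspond via `u = (S_F)⁻¹ S_K v` (i.e. `S_F u = S_K v`) and `v = λ⁻¹ S u`
(i.e. `λ • v = S u`). -/
theorem stmt_1 (S S_F S_K : H →ₗ.[ℂ] H)
    (hdense : Dense (S.domain : Set H))
    (hclosed : S.IsClosed)
    (hsym : ∀ u v : S.domain, ⟪S u, (v : H)⟫ = ⟪(u : H), S v⟫)
    (ε : ℝ) (hε : 0 < ε)
    (hbound : ∀ u : S.domain, ε * ‖(u : H)‖ ^ 2 ≤ (⟪(u : H), S u⟫).re)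
    (hFext : S ≤ S_F) (hKext : S ≤ S_K)
    (hFadj : ∀ (v : S_F.domain) (u : S.domain), ⟪S u, (v : H)⟫ = ⟪(u : H), S_F v⟫)
    (hKadj : ∀ (v : S_K.domain) (u : S.domain), ⟪S u, (v : H)⟫ = ⟪(u : H), S_K v⟫)
    (hFbound : ∀ v : S_F.domain, ε * ‖(v : H)‖ ^ 2 ≤ (⟪(v : H), S_F v⟫).re)
    (hdomK : S_K.domain = S.domain ⊔ adjKerD S)
    (lam : ℂ) (hlam : lam ≠ 0) :
    ((∃ v : S_K.domain, (v : H) ≠ 0 ∧ S_K v = lam • (v : H)) ↔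
      (∃ u : S.domain, (u : H) ≠ 0 ∧
        ∀ w : S.domain, ⟪S w, S u⟫ = ⟪(w : H), lam • S u⟫)) ∧
    (∀ v : S_K.domain, (v : H) ≠ 0 → S_K v = lam • (v : H) →
      ∃ u : S.domain, (u : H) ≠ 0 ∧
        (∀ w : S.domain, ⟪S w, S u⟫ = ⟪(w : H), lam • S u⟫) ∧
        (∃ hm : (u : H) ∈ S_F.domain, S_F ⟨(u : H), hm⟩ = S_K v) ∧
        lam • (v : H) = S u) ∧
    (∀ u : S.domain, (u : H) ≠ 0 →
      (∀ w : S.domain, ⟪S w, S u⟫ = ⟪(w : H), lam • S u⟫) →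
      ∃ v : S_K.domain, (v : H) ≠ 0 ∧ S_K v = lam • (v : H) ∧ lam • (v : H) = S u) := by
  -- S u ≠ 0 when u ≠ 0
  have hSne : ∀ u : S.domain, (u : H) ≠ 0 → S u ≠ 0 := by
    intro u hu h0
    have hb := hbound u
    rw [h0, inner_zero_right] at hb
    simp only [Complex.zero_re] at hb
    have hn : 0 < ‖(u : H)‖ := norm_pos_iff.mpr hu
    nlinarith [pow_pos hn 2, mul_pos hε (pow_pos hn 2)]
  -- S_K kills adjKerD
  have hKzero : ∀ w : S_K.domain, (w : H) ∈ adjKerD S → S_K w = 0 := by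
    intro w hw
    refine hdense.eq_zero_of_inner_right ℂ fun x hx => ?_
    exact (hKadj w ⟨x, hx⟩).symm.trans (hw ⟨x, hx⟩)
  -- membership transfers
  have hmemS : ∀ x : H, x ∈ S.domain → x ∈ S_K.domain := fun x hx => hKext.1 hx
  have hmemKer : ∀ x : H, x ∈ adjKerD S → x ∈ S_K.domain := fun x hx => by
    rw [hdomK]; exact Submodule.mem_sup_right hx
  -- decomposition: S_K v = S u for v = u + w
  have hdecomp : ∀ v : S_K.domain, ∃ (u : S.domain) (w : H), w ∈ adjKerD S ∧
      (v : H) = (u : H) + w ∧ S_K v = S u := by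
    intro v
    have hv : (v : H) ∈ S.domain ⊔ adjKerD S := hdomK ▸ v.2
    obtain ⟨y, hy, z, hz, hyz⟩ := Submodule.mem_sup.mp hv
    refine ⟨⟨y, hy⟩, z, hz, hyz.symm, ?_⟩
    have hveq : v = (⟨y, hmemS y hy⟩ : S_K.domain) + ⟨z, hmemKer z hz⟩ :=
      Subtype.ext hyz.symm
    rw [hveq, S_K.map_add, hKzero ⟨z, hmemKer z hz⟩ hz, add_zero]
    exact (hKext.2 rfl).symm
  -- clause 2
  have clause2 : ∀ v : S_K.domain, (v : H) ≠ 0 → S_K v = lam • (v : H) →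
      ∃ u : S.domain, (u : H) ≠ 0 ∧
        (∀ w : S.domain, ⟪S w, S u⟫ = ⟪(w : H), lam • S u⟫) ∧
        (∃ hm : (u : H) ∈ S_F.domain, S_F ⟨(u : H), hm⟩ = S_K v) ∧
        lam • (v : H) = S u := by
    intro v hv0 heig
    obtain ⟨u, w, hw, hvsum, hSKv⟩ := hdecomp v
    have hSu : S u = lam • (v : H) := hSKv ▸ heig
    have hu0 : (u : H) ≠ 0 := by
      intro h0
      have : S u = 0 := by
        have : u = 0 := Subtype.ext h0
        rw [this, S.map_zero]
      rw [this] at hSu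
      exact hv0 ((smul_eq_zero_iff_right hlam).mp hSu.symm)
    refine ⟨u, hu0, ?_, ⟨hFext.1 u.2, ?_⟩, hSu.symm⟩
    · intro w'
      calc ⟪S w', S u⟫ = lam * (⟪S w', (u : H)⟫ + ⟪S w', w⟫) := by
            rw [hSu, hvsum, inner_smul_right, inner_add_right]
        _ = lam * ⟪(w' : H), S u⟫ := by rw [hw w', add_zero, hsym w' u]
        _ = ⟪(w' : H), lam • S u⟫ := (inner_smul_right _ _ _).symm
    · rw [hSKv]; exact (hFext.2 rfl).symm
  -- clause 3
  have clause3 : ∀ u : S.domain, (u : H) ≠ 0 →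
      (∀ w : S.domain, ⟪S w, S u⟫ = ⟪(w : H), lam • S u⟫) →
      ∃ v : S_K.domain, (v : H) ≠ 0 ∧ S_K v = lam • (v : H) ∧ lam • (v : H) = S u := by
    intro u hu0 heq
    set w : H := lam⁻¹ • S u - (u : H) with hwdef
    have hwker : w ∈ adjKerD S := by
      intro w'
      rw [hwdef, inner_sub_right, inner_smul_right, heq w', inner_smul_right,
        hsym w' u]
      field_simp
      simp
    have hvmem : lam⁻¹ • S u ∈ S_K.domain := by
      rw [hdomK]
      have : lam⁻¹ • S u = (u : H) + w := by rw [hwdef]; abel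
      rw [this]
      exact Submodule.add_mem_sup u.2 hwker
    refine ⟨⟨lam⁻¹ • S u, hvmem⟩, ?_, ?_, ?_⟩
    · simp only [ne_eq, smul_eq_zero, inv_eq_zero, hlam, false_or]
      exact hSne u hu0
    · have hveq : (⟨lam⁻¹ • S u, hvmem⟩ : S_K.domain) =
          (⟨(u : H), hmemS _ u.2⟩ : S_K.domain) + ⟨w, hmemKer w hwker⟩ := by
        apply Subtype.ext
        simp only [Submodule.coe_add]
        rw [hwdef]; abel
      have hKval : S_K ⟨lam⁻¹ • S u, hvmem⟩ = S u := by
        rw [hveq, S_K.map_add, hKzero ⟨w, hmemKer w hwker⟩ hwker, add_zero,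
          ← hKext.2 (rfl : ((u : S.domain) : H) = _)]
      rw [hKval]
      show S u = lam • (lam⁻¹ • S u)
      rw [smul_smul, mul_inv_cancel₀ hlam, one_smul]
    · show lam • (lam⁻¹ • S u) = S u
      rw [smul_smul, mul_inv_cancel₀ hlam, one_smul]
  refine ⟨⟨fun ⟨v, h1, h2⟩ => ?_, fun ⟨u, h1, h2⟩ => ?_⟩, clause2, clause3⟩
  · obtain ⟨u, hu1, hu2, -⟩ := clause2 v h1 h2
    exact ⟨u, hu1, hu2⟩
  · obtain ⟨v, hv1, hv2, -⟩ := clause3 u h1 h2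
    exact ⟨v, hv1, hv2⟩
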